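/- (Appendix C, evaluation of c(W) for the structured two-column matrix) Let k ≥ 2 be an even integer and α > 0. Let W = [w₁, w₂] ∈ ℝ^{k×2}, where w₁ is the all-ones vector in ℝ^k and w₂(i) = 1 for 1 ≤ i ≤ k/2, w₂(i) = −1 for k/2 < i ≤ k. Then min over nonempty T ⊆ [k] of (1/(2|T|))·log det( I₂ + α·W_Tᵀ W_T ) = (1/k)·log(1 + k·α), i.e., the minimum is attained at T = [k]. -/

import Mathlib

open Matrix Real

noncomputable section

/-- `W_T^⊺ W_T` for a subset `T` of the rows of `W`. -/
def gramSub {k l : ℕ} (W : Matrix (Fin k) (Fin l) ℝ) (T : Finset (Fin k)) :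
    Matrix (Fin l) (Fin l) ℝ :=
  (W.submatrix (fun i : T => (i : Fin k)) id)ᵀ * W.submatrix (fun i : T => (i : Fin k)) id

lemma gramSub_apply {k l : ℕ} (W : Matrix (Fin k) (Fin l) ℝ) (T : Finset (Fin k))
    (i j : Fin l) : gramSub W T i j = ∑ x ∈ T, W x i * W x j := by
  rw [gramSub, Matrix.mul_apply, ← Finset.sum_coe_sort T fun x => W x i * W x j]
  rfl

lemma det_gram {k : ℕ} (α : ℝ) (W : Matrix (Fin k) (Fin 2) ℝ)
    (hW : ∀ i : Fin k, W i 0 = 1 ∧ W i 1 = (if (i : ℕ) < k / 2 then (1 : ℝ) else -1))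
    (T : Finset (Fin k)) :
    (1 + α • gramSub W T).det
      = (1 + α * T.card)^2 - (α * ∑ i ∈ T, W i 1)^2 := by
  have h00 : gramSub W T 0 0 = T.card := by
    rw [gramSub_apply]
    rw [Finset.sum_congr rfl (fun i _ => by rw [(hW i).1, one_mul] : ∀ i ∈ T, W i 0 * W i 0 = 1)]
    simp
  have h11 : gramSub W T 1 1 = T.card := by
    rw [gramSub_apply]
    rw [Finset.sum_congr rfl (fun i _ => by rw [(hW i).2]; split_ifs <;> norm_num :
      ∀ i ∈ T, W i 1 * W i 1 = 1)]
    simp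
  have h01 : gramSub W T 0 1 = ∑ i ∈ T, W i 1 := by
    rw [gramSub_apply]
    exact Finset.sum_congr rfl fun i _ => by rw [(hW i).1, one_mul]
  have h10 : gramSub W T 1 0 = ∑ i ∈ T, W i 1 := by
    rw [gramSub_apply]
    exact Finset.sum_congr rfl fun i _ => by rw [(hW i).1, mul_one]
  rw [Matrix.det_fin_two]
  simp only [Matrix.add_apply, Matrix.smul_apply, Matrix.one_apply, smul_eq_mul,
    h00, h11, h01, h10]
  norm_num
  ring

lemma key_concavity (α K u : ℝ) (hα : 0 < α) (hK : 0 < K) (hu0 : 0 ≤ u) (huK : u ≤ K) :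
    (u / K) * Real.logb 2 (1 + K * α) ≤ Real.logb 2 (1 + α * u) := by
  have h2 : (0:ℝ) < Real.log 2 := Real.log_pos one_lt_two
  have hcon := strictConcaveOn_log_Ioi.concaveOn
  have h := hcon.2 (Set.mem_Ioi.mpr one_pos)
    (Set.mem_Ioi.mpr (by positivity : (0:ℝ) < 1 + K*α))
    (show (0:ℝ) ≤ 1 - u/K by rw [sub_nonneg]; exact div_le_one_of_le₀ huK hK.le)
    (show (0:ℝ) ≤ u/K by positivity)
    (show (1 - u/K) + u/K = 1 by ring)
  simp only [smul_eq_mul, Real.log_one, mul_zero, mul_one, zero_add] at h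
  have hKne : K ≠ 0 := hK.ne'
  have he : 1 - u / K + u / K * (1 + K * α) = 1 + α * u := by field_simp; ring
  rw [he] at h
  have e1 : u/K * Real.logb 2 (1 + K*α) = (u/K * Real.log (1 + K*α)) / Real.log 2 := by
    rw [Real.logb]; ring
  rw [e1, Real.logb]
  gcongr

/-- **Appendix C** (evaluation of `c(W)` for the structured two-column matrix). For even
`k ≥ 2`, `W = [𝟙, w₂]` with `w₂ = +1` on the first half and `−1` on the second half, the
minimum over nonempty `T ⊆ [k]` of `(1/(2|T|)) log₂ det(I₂ + α W_Tᵀ W_T)` equals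
`(1/k) log₂(1 + kα)`, attained at `T = [k]`. -/
theorem appendixC_cW_evaluation
    (k : ℕ) (hk : 2 ≤ k) (hke : Even k) (α : ℝ) (hα : 0 < α)
    (W : Matrix (Fin k) (Fin 2) ℝ)
    (hW : ∀ i : Fin k, W i 0 = 1 ∧ W i 1 = (if (i : ℕ) < k / 2 then (1 : ℝ) else -1)) :
    (∀ T : Finset (Fin k), T.Nonempty →
        (1 / (k : ℝ)) * Real.logb 2 (1 + (k : ℝ) * α) ≤
          (1 / (2 * (T.card : ℝ))) *
            Real.logb 2 ((1 + α • gramSub W T).det)) ∧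
      (1 / (2 * ((Finset.univ : Finset (Fin k)).card : ℝ))) *
          Real.logb 2 ((1 + α • gramSub W Finset.univ).det)
        = (1 / (k : ℝ)) * Real.logb 2 (1 + (k : ℝ) * α) := by
  have hk2 : k / 2 * 2 = k := Nat.div_mul_cancel hke.two_dvd
  have hkR : (0:ℝ) < k := by exact_mod_cast (by omega : 0 < k)
  constructor
  · intro T hT
    set A := T.filter (fun i : Fin k => (i:ℕ) < k/2) with hA
    set B := T.filter (fun i : Fin k => ¬ (i:ℕ) < k/2) with hB
    have hAB : A.card + B.card = T.card :=
      Finset.card_filter_add_card_filter_not (p := fun i : Fin k => (i:ℕ) < k/2)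
    have hS : (∑ i ∈ T, W i 1) = (A.card:ℝ) - B.card := by
      rw [← Finset.sum_filter_add_sum_filter_not T (fun i : Fin k => (i:ℕ) < k/2)]
      have e1 : ∑ i ∈ A, W i 1 = (A.card : ℝ) := by
        rw [Finset.sum_congr rfl fun i hi => by
          rw [(hW i).2, if_pos (Finset.mem_filter.mp hi).2]]
        simp
      have e2 : ∑ i ∈ B, W i 1 = -(B.card : ℝ) := by
        rw [Finset.sum_congr rfl fun i hi => by
          rw [(hW i).2, if_neg (Finset.mem_filter.mp hi).2]]
        simp
      rw [e1, e2]; ring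
    -- cardinality bounds
    have hAcard : A.card ≤ k / 2 := by
      rw [← Finset.card_range (k/2)]
      apply Finset.card_le_card_of_injOn (fun i : Fin k => (i:ℕ))
      · intro i hi
        rw [hA, Finset.mem_coe, Finset.mem_filter] at hi
        exact Finset.mem_coe.mpr (Finset.mem_range.mpr hi.2)
      · intro i _ j _ h
        exact Fin.val_injective h
    have hBcard : B.card ≤ k / 2 := by
      rw [← Finset.card_range (k/2)]
      apply Finset.card_le_card_of_injOn (fun i : Fin k => (i:ℕ) - k/2)
      · intro i hi
        rw [hB, Finset.mem_coe, Finset.mem_filter] at hi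
        have h1 := hi.2
        have h2 := i.isLt
        exact Finset.mem_coe.mpr (Finset.mem_range.mpr (by show (i:ℕ) - k/2 < k/2; omega))
      · intro i hi j hj h
        simp only [hB, Finset.coe_filter, Set.mem_setOf_eq] at hi hj
        have h1 := hi.2
        have h2 := hj.2
        simp only at h
        exact Fin.val_injective (by omega)
    have ha2 : 2 * (A.card:ℝ) ≤ k := by exact_mod_cast (by omega : 2 * A.card ≤ k)
    have hb2 : 2 * (B.card:ℝ) ≤ k := by exact_mod_cast (by omega : 2 * B.card ≤ k)
    have ht : (T.card:ℝ) = (A.card:ℝ) + B.card := by exact_mod_cast hAB.symm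
    have hdet : (1 + α • gramSub W T).det
        = (1 + α * (2*(A.card:ℝ))) * (1 + α * (2*(B.card:ℝ))) := by
      rw [det_gram α W hW T, hS, ht]; ring
    have hpa : (0:ℝ) < 1 + α * (2*(A.card:ℝ)) := by positivity
    have hpb : (0:ℝ) < 1 + α * (2*(B.card:ℝ)) := by positivity
    have hlog : Real.logb 2 ((1 + α • gramSub W T).det)
        = Real.logb 2 (1 + α * (2*(A.card:ℝ))) + Real.logb 2 (1 + α * (2*(B.card:ℝ))) := by
      rw [hdet, Real.logb_mul hpa.ne' hpb.ne']
    have k1 := key_concavity α k (2*(A.card:ℝ)) hα hkR (by positivity) ha2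
    have k2 := key_concavity α k (2*(B.card:ℝ)) hα hkR (by positivity) hb2
    have htpos : (0:ℝ) < T.card := by exact_mod_cast Finset.card_pos.mpr hT
    have hsum : (2*(T.card:ℝ)/k) * Real.logb 2 (1 + (k:ℝ)*α)
        ≤ Real.logb 2 ((1 + α • gramSub W T).det) := by
      rw [hlog, ht]
      calc (2*((A.card:ℝ)+B.card)/k) * Real.logb 2 (1 + (k:ℝ)*α)
          = (2*(A.card:ℝ)/k) * Real.logb 2 (1 + (k:ℝ)*α)
            + (2*(B.card:ℝ)/k) * Real.logb 2 (1 + (k:ℝ)*α) := by ring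
        _ ≤ _ := add_le_add k1 k2
    calc (1 / (k : ℝ)) * Real.logb 2 (1 + (k:ℝ)*α)
        = (1/(2*(T.card:ℝ))) * ((2*(T.card:ℝ)/k) * Real.logb 2 (1 + (k:ℝ)*α)) := by
          field_simp
      _ ≤ (1/(2*(T.card:ℝ))) * Real.logb 2 ((1 + α • gramSub W T).det) := by
          apply mul_le_mul_of_nonneg_left hsum (by positivity)
  · have hS : ∑ i : Fin k, W i 1 = 0 := by
      rw [Finset.sum_congr rfl fun i _ => (hW i).2]
      rw [Fin.sum_univ_eq_sum_range (fun i => if i < k/2 then (1:ℝ) else -1) k]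
      rw [Finset.range_eq_Ico,
        ← Finset.sum_Ico_consecutive _ (Nat.zero_le (k/2)) (Nat.div_le_self k 2)]
      have e1 : ∑ i ∈ Finset.Ico 0 (k/2), (if i < k/2 then (1:ℝ) else -1)
          = ((k/2 : ℕ) : ℝ) := by
        rw [Finset.sum_congr rfl fun i hi => if_pos (Finset.mem_Ico.mp hi).2]
        simp
      have e2 : ∑ i ∈ Finset.Ico (k/2) k, (if i < k/2 then (1:ℝ) else -1)
          = -((k/2 : ℕ) : ℝ) := by
        rw [Finset.sum_congr rfl fun i hi =>
          if_neg (by have := (Finset.mem_Ico.mp hi).1; omega)]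
        rw [Finset.sum_const, Nat.card_Ico]
        have : k - k/2 = k/2 := by omega
        rw [this]
        simp
      rw [e1, e2]; ring
    have hcard : ((Finset.univ : Finset (Fin k)).card : ℝ) = k := by
      simp
    have hdet : (1 + α • gramSub W (Finset.univ : Finset (Fin k))).det
        = (1 + (k:ℝ)*α)^2 := by
      rw [det_gram α W hW, hS, hcard]; ring
    rw [hdet, hcard, Real.logb_pow]
    have hkne : (k:ℝ) ≠ 0 := hkR.ne'
    field_simp
    ring
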